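/- Let q ≥ 2 and n ≥ 1 be integers. The period of any orientable sequence of order n over ℤ_q is at most (q^n − q^{⌈n/2⌉})/2. -/

import Mathlib

namespace OSeq

variable {q : ℕ}

/-- The `n`-tuple (window) of the sequence `s` at position `i`. -/
def window (s : ℤ → ZMod q) (n : ℕ) (i : ℤ) : Fin n → ZMod q :=
  fun k => s (i + (k : ℕ))

/-- The reverse of an `n`-tuple. -/
def tupRev {n : ℕ} (u : Fin n → ZMod q) : Fin n → ZMod q :=
  fun k => u k.rev

/-- `m` is the (least) period of the periodic sequence `s`. -/
def IsPeriod (s : ℤ → ZMod q) (m : ℕ) : Prop :=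
  0 < m ∧ (∀ i : ℤ, s (i + (m : ℤ)) = s i) ∧
    ∀ m' : ℕ, 0 < m' → (∀ i : ℤ, s (i + (m' : ℤ)) = s i) → m ≤ m'

/-- `s` is an `n`-window sequence of period `m`. -/
def IsNWindowSeq (s : ℤ → ZMod q) (n m : ℕ) : Prop :=
  IsPeriod s m ∧ ∀ i j : ℤ, window s n i = window s n j → i ≡ j [ZMOD (m : ℤ)]

/-- `s` is an orientable sequence of order `n` and period `m`. -/
def IsOS (s : ℤ → ZMod q) (n m : ℕ) : Prop :=
  IsNWindowSeq s n m ∧ ∀ i j : ℤ, window s n i ≠ tupRev (window s n j)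

/-- `s` is a negative orientable sequence of order `n` and period `m`. -/
def IsNOS (s : ℤ → ZMod q) (n m : ℕ) : Prop :=
  IsNWindowSeq s n m ∧ ∀ i j : ℤ, window s n i ≠ - tupRev (window s n j)

/-- `s` is a special orientable sequence of order `n` and period `m`:
orientable and also negative orientable. -/
def IsSpecialOS (s : ℤ → ZMod q) (n m : ℕ) : Prop :=
  IsOS s n m ∧ ∀ i j : ℤ, window s n i ≠ - tupRev (window s n j)

/-- The weight modulo `q` of one period of `s`. -/
def wq (s : ℤ → ZMod q) (m : ℕ) : ZMod q :=
  ∑ i ∈ Finset.range m, s (i : ℤ)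

/-- The alternating sign weight modulo `q` of one period of `s`. -/
def wqA (s : ℤ → ZMod q) (m : ℕ) : ZMod q :=
  ∑ i ∈ Finset.range m, (-1 : ZMod q) ^ (m - 1 - i) * s (i : ℤ)

/-- The Lempel homomorphism `D` on sequences. -/
def D (t : ℤ → ZMod q) : ℤ → ZMod q := fun j => t (j + 1) - t j

/-- The homomorphism `A` on sequences. -/
def A (t : ℤ → ZMod q) : ℤ → ZMod q := fun j => t (j + 1) + t j

/-- Shift of a sequence by `c`. -/
def shift (t : ℤ → ZMod q) (c : ℤ) : ℤ → ZMod q := fun i => t (i + c)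

/-- `t'` is a translate of `t`. -/
def IsTranslate (t t' : ℤ → ZMod q) : Prop := ∃ c : ZMod q, ∀ i : ℤ, t' i = t i + c

/-- `t'` is an alternating sign translate of `t`. -/
def IsAltTranslate (t t' : ℤ → ZMod q) : Prop :=
  ∃ c : ZMod q, ∀ i : ℤ, t' i = t i + (if i % 2 = 0 then c else -c)

/-- Two sequences are (`n`-window) disjoint. -/
def WindowDisjoint (n : ℕ) (s t : ℤ → ZMod q) : Prop :=
  ∀ i j : ℤ, window s n i ≠ window t n j

/-- Orientable-disjoint. -/
def ODisjoint (n : ℕ) (s t : ℤ → ZMod q) : Prop :=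
  WindowDisjoint n s t ∧ ∀ i j : ℤ, window s n i ≠ tupRev (window t n j)

/-- Negative orientable-disjoint (no-disjoint). -/
def NODisjoint (n : ℕ) (s t : ℤ → ZMod q) : Prop :=
  WindowDisjoint n s t ∧ ∀ i j : ℤ, window s n i ≠ - tupRev (window t n j)

/-- Special-orientable-disjoint. -/
def SpecialODisjoint (n : ℕ) (s t : ℤ → ZMod q) : Prop :=
  ODisjoint n s t ∧ ∀ i j : ℤ, window s n i ≠ - tupRev (window t n j)

/-- The string `a^t` appears in `s`. -/
def HasString (s : ℤ → ZMod q) (a : ZMod q) (t : ℕ) : Prop :=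
  ∃ j : ℤ, ∀ k : ℕ, k < t → s (j + (k : ℤ)) = a

/-- There is a run `a^t` of `a` in `s` starting at position `j`. -/
def IsRunAt (s : ℤ → ZMod q) (a : ZMod q) (j : ℤ) (t : ℕ) : Prop :=
  (∀ k : ℕ, k < t → s (j + (k : ℤ)) = a) ∧ s (j - 1) ≠ a ∧ s (j + (t : ℤ)) ≠ a

/-- `a^t` is a maximal run of `a` in `s`: the string `a^t` appears and every
string `a^{t'}` appearing in `s` has `t' ≤ t`. -/
def IsMaxRun (s : ℤ → ZMod q) (a : ZMod q) (t : ℕ) : Prop :=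
  HasString s a t ∧ ∀ t' : ℕ, HasString s a t' → t' ≤ t

/-- `k`-th entry of the alternating string `a, -a, a, -a, ...`. -/
def altVal (a : ZMod q) (k : ℕ) : ZMod q := if k % 2 = 0 then a else -a

/-- The signed string `ạ^t` (alternating `a, -a, ...`) appears in `s`. -/
def HasSignedString (s : ℤ → ZMod q) (a : ZMod q) (t : ℕ) : Prop :=
  ∃ j : ℤ, ∀ k : ℕ, k < t → s (j + (k : ℤ)) = altVal a k

/-- There is a signed run `ạ^t` of `a` in `s` starting at position `j`. -/
def IsSignedRunAt (s : ℤ → ZMod q) (a : ZMod q) (j : ℤ) (t : ℕ) : Prop :=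
  (∀ k : ℕ, k < t → s (j + (k : ℤ)) = altVal a k) ∧
    s (j - 1) ≠ -a ∧ s (j + (t : ℤ)) ≠ altVal a t

/-- `ạ^t` is a maximal signed run of `a` in `s`. -/
def IsMaxSignedRun (s : ℤ → ZMod q) (a : ZMod q) (t : ℕ) : Prop :=
  HasSignedString s a t ∧ ∀ t' : ℕ, HasSignedString s a t' → t' ≤ t

/-- The sequence obtained from the ring sequence `[s_0,...,s_{m-1}]` of `s` by
inserting one extra symbol `a` at ring position `r`, i.e. with ring sequence
`[s_0,...,s_{r-1}, a, s_r, ..., s_{m-1}]` of length `m+1`. -/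
def insert1 (s : ℤ → ZMod q) (m r : ℕ) (a : ZMod q) : ℤ → ZMod q :=
  fun j =>
    let j' := (j % ((m : ℤ) + 1)).toNat
    if j' < r then s (j' : ℤ) else if j' = r then a else s ((j' : ℤ) - 1)

/-- The sequence obtained from the ring sequence `[s_0,...,s_{m-1}]` of `s` by
inserting the two symbols `a, -a` at ring position `r`, i.e. with ring sequence
`[s_0,...,s_{r-1}, a, -a, s_r, ..., s_{m-1}]` of length `m+2`. -/
def insert2 (s : ℤ → ZMod q) (m r : ℕ) (a : ZMod q) : ℤ → ZMod q :=
  fun j =>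
    let j' := (j % ((m : ℤ) + 2)).toNat
    if j' < r then s (j' : ℤ)
    else if j' = r then a
    else if j' = r + 1 then -a
    else s ((j' : ℤ) - 2)

/-- The operation `E_a` (with the convention `E_0(S) = S`). -/
def Emod (s : ℤ → ZMod q) (m r : ℕ) (a : ZMod q) : ℤ → ZMod q :=
  if a = 0 then s else insert1 s m r a

/-- A sequence is good (for order `n`) if every run of `0` has length at most `n-2`. -/
def GoodSeq (s : ℤ → ZMod q) (n : ℕ) : Prop :=
  ∀ t : ℕ, HasString s 0 t → t ≤ n - 2

/-- A tuple is uniform if it is constant. -/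
def Uniform {n : ℕ} (u : Fin n → ZMod q) : Prop := ∃ c : ZMod q, ∀ i, u i = c

/-- A tuple is symmetric if it equals its own reverse. -/
def Symm {n : ℕ} (u : Fin n → ZMod q) : Prop := ∀ i : Fin n, u i = u i.rev

/-- An `n`-tuple is `m`-symmetric (`m ≤ n`) if `u_i = u_{m-1-i}` for `0 ≤ i ≤ m-1`. -/
def MSymm {n : ℕ} (u : Fin n → ZMod q) (m : ℕ) (hm : m ≤ n) : Prop :=
  ∀ i : Fin m, u (Fin.castLE hm i) = u (Fin.castLE hm i.rev)

/-- An `n`-tuple (`n ≥ 2`) is alternating. -/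
def Alternating {n : ℕ} (hn : 2 ≤ n) (u : Fin n → ZMod q) : Prop :=
  u ⟨0, by omega⟩ ≠ u ⟨1, by omega⟩ ∧
    ∀ i : Fin n, u i = if (i : ℕ) % 2 = 0 then u ⟨0, by omega⟩ else u ⟨1, by omega⟩

/-- `L_n(v)`: the set of `n`-tuples whose first `n-r` entries agree with the
`(n-r)`-tuple `v`. -/
def Lset (n r : ℕ) (v : Fin (n - r) → ZMod q) : Set (Fin n → ZMod q) :=
  {u | ∀ i : Fin (n - r), u (Fin.castLE (Nat.sub_le n r) i) = v i}

/-- The `n`-tuple `u` appears in the sequence `s`. -/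
def AppearsIn (s : ℤ → ZMod q) (n : ℕ) (u : Fin n → ZMod q) : Prop :=
  ∃ i : ℤ, window s n i = u

end OSeq

open OSeq

lemma tupRev_tupRev {q n : ℕ} (u : Fin n → ZMod q) : tupRev (tupRev u) = u := by
  funext k
  simp [tupRev, Fin.rev_rev]

/-- The number of palindromic `n`-tuples over `ZMod q` is `q ^ ⌈n/2⌉`. -/
lemma card_palindromes (q n : ℕ) [NeZero q] :
    (Finset.univ.filter (fun u : Fin n → ZMod q => tupRev u = u)).card
      = q ^ ((n + 1) / 2) := by
  have hN : (n + 1) / 2 ≤ n := by omega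
  have key : (Finset.univ.filter (fun u : Fin n → ZMod q => tupRev u = u)).card
      = (Finset.univ : Finset (Fin ((n + 1) / 2) → ZMod q)).card := by
    apply Finset.card_nbij'
      (i := fun u => fun k : Fin ((n + 1) / 2) => u (Fin.castLE hN k))
      (j := fun v => fun k : Fin n =>
        if h : (k : ℕ) < (n + 1) / 2 then v ⟨k, h⟩
        else v ⟨n - 1 - (k : ℕ), by omega⟩)
    · intro u hu
      exact Finset.mem_univ _
    · intro v hv
      simp only [Finset.mem_coe, Finset.mem_filter, Finset.mem_univ, true_and]
      funext k
      have hk := k.isLt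
      have hrev : ((Fin.rev k : Fin n) : ℕ) = n - 1 - (k : ℕ) := by
        simp [Fin.val_rev]; omega
      simp only [tupRev, hrev]
      split_ifs with h1 h2 h2
      · exact congrArg v (Fin.ext (by simp only [Fin.mk.injEq]; omega))
      · rfl
      · exact congrArg v (Fin.ext (by simp only [Fin.mk.injEq]; omega))
      · exfalso; omega
    · intro u hu
      simp only [Finset.mem_coe, Finset.mem_filter, Finset.mem_univ, true_and] at hu
      have hu' : ∀ k : Fin n, u (Fin.rev k) = u k := fun k => congrFun hu k
      funext k
      have hk := k.isLt
      beta_reduce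
      by_cases h1 : (k : ℕ) < (n + 1) / 2
      · rw [dif_pos h1]
        exact congrArg u (Fin.ext rfl)
      · rw [dif_neg h1]
        have h2 : (Fin.castLE hN (⟨n - 1 - (k : ℕ), by omega⟩ : Fin ((n+1)/2)) : Fin n)
            = Fin.rev k := Fin.ext (by simp only [Fin.coe_castLE, Fin.val_rev]; omega)
        beta_reduce
        rw [h2]
        exact hu' k
    · intro v hv
      funext k
      have h1 : ((Fin.castLE hN k : Fin n) : ℕ) < (n + 1) / 2 := k.isLt
      beta_reduce
      rw [dif_pos h1]
      exact congrArg v (Fin.ext rfl)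
  rw [key]
  simp [ZMod.card]

/-- The period of any orientable sequence of order `n` over `ℤ_q` is at most
`(q^n - q^⌈n/2⌉)/2`. -/
theorem period_le_of_orientable {q n m : ℕ} (hq : 2 ≤ q) (hn : 1 ≤ n)
    (s : ℤ → ZMod q) (hS : IsOS s n m) :
    2 * (m : ℤ) ≤ (q : ℤ) ^ n - (q : ℤ) ^ ((n + 1) / 2) := by
  haveI : NeZero q := ⟨by omega⟩
  classical
  obtain ⟨⟨⟨hm, hper, hmin⟩, hwin⟩, horient⟩ := hS
  set pal : Finset (Fin n → ZMod q) :=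
    Finset.univ.filter (fun u => tupRev u = u) with hpal
  set A : Finset (Fin n → ZMod q) :=
    (Finset.range m).image (fun i => window s n (i : ℕ)) with hA
  set B : Finset (Fin n → ZMod q) :=
    (Finset.range m).image (fun i => tupRev (window s n (i : ℕ))) with hB
  have hinj : ∀ i ∈ Finset.range m, ∀ j ∈ Finset.range m,
      window s n (i : ℕ) = window s n (j : ℕ) → i = j := by
    intro i hi j hj h
    have hd : (m : ℤ) ∣ (j : ℤ) - (i : ℤ) := (hwin _ _ h).dvd
    simp only [Finset.mem_range] at hi hj
    have := Int.eq_zero_of_abs_lt_dvd hd (by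
      rw [abs_lt]; constructor <;> [push_cast; push_cast] <;> omega)
    omega
  have hcardA : A.card = m := by
    rw [hA, Finset.card_image_of_injOn, Finset.card_range]
    intro i hi j hj h
    exact hinj i (by simpa using hi) j (by simpa using hj) h
  have hcardB : B.card = m := by
    rw [hB, Finset.card_image_of_injOn, Finset.card_range]
    intro i hi j hj h
    have h' : window s n (i : ℕ) = window s n (j : ℕ) := by
      have := congrArg tupRev h
      rwa [tupRev_tupRev, tupRev_tupRev] at this
    exact hinj i (by simpa using hi) j (by simpa using hj) h'
  have hdisj : Disjoint A B := by
    rw [Finset.disjoint_left]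
    intro u hu hv
    rw [hA, Finset.mem_image] at hu
    rw [hB, Finset.mem_image] at hv
    obtain ⟨i, _, hi⟩ := hu
    obtain ⟨j, _, hj⟩ := hv
    exact horient (i : ℕ) (j : ℕ) (hi.trans hj.symm)
  have hsub : A ∪ B ⊆ Finset.univ \ pal := by
    intro u hu
    rw [Finset.mem_sdiff]
    refine ⟨Finset.mem_univ _, ?_⟩
    rw [hpal, Finset.mem_filter]
    rintro ⟨-, hsymm⟩
    rw [Finset.mem_union] at hu
    rcases hu with hu | hu
    · rw [hA, Finset.mem_image] at hu
      obtain ⟨i, -, hi⟩ := hu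
      exact horient (i : ℕ) (i : ℕ) (by rw [hi, hsymm])
    · rw [hB, Finset.mem_image] at hu
      obtain ⟨i, -, hi⟩ := hu
      have h0 : tupRev u = u := hsymm
      rw [← hi, tupRev_tupRev] at h0
      exact horient (i : ℕ) (i : ℕ) h0
  have hcount : 2 * m ≤ q ^ n - q ^ ((n + 1) / 2) := by
    have h1 : (A ∪ B).card = 2 * m := by
      rw [Finset.card_union_of_disjoint hdisj, hcardA, hcardB]; ring
    have h2 : (A ∪ B).card ≤ (Finset.univ \ pal).card := Finset.card_le_card hsub
    have h3 : (Finset.univ \ pal).card = q ^ n - q ^ ((n + 1) / 2) := by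
      rw [Finset.card_sdiff_of_subset (Finset.filter_subset _ _)]
      congr 1
      · simp [ZMod.card]
      · exact card_palindromes q n
    omega
  have hple : q ^ ((n + 1) / 2) ≤ q ^ n :=
    Nat.pow_le_pow_right (by omega) (by omega)
  have h5 : ((2 * m : ℕ) : ℤ) ≤ ((q ^ n - q ^ ((n + 1) / 2) : ℕ) : ℤ) :=
    Nat.cast_le.mpr hcount
  rw [Nat.cast_sub hple] at h5
  push_cast at h5
  linarith
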